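/- Derivative of flow utility under ρ-period finite dependence (Proposition 4): Let Q_A be an X×X row-stochastic real matrix, let Q_a be an X×X real matrix, let β ∈ [0, 1), and suppose there exists a natural number ρ ≥ 1 such that Q_a Q_A^ρ = Q_A^{ρ+1} (ρ-period finite dependence between actions a and A). Let p_A ∈ ℝ^X have all entries in (0,1), let p_a ∈ ℝ^X have all entries in (0,1), and define π_a(t) := (I_X − tQ_a)(I_X − tQ_A)⁻¹(−log p_A) + log p_a for t ∈ [0,1). Then π_a is differentiable at β with derivative ∂π_a/∂β = −(Q_a − Q_A)(I_X + βQ_A + β²Q_A² + ⋯ + β^{ρ−1}Q_A^{ρ−1})(I_X − βQ_A)⁻¹(−log p_A). -/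

import Mathlib

private lemma sumMulVec {X : ℕ} {ι : Type*} (s : Finset ι) (f : ι → Matrix (Fin X) (Fin X) ℝ)
    (v : Fin X → ℝ) : (∑ i ∈ s, f i).mulVec v = ∑ i ∈ s, (f i).mulVec v := by
  induction s using Finset.cons_induction with
  | empty => simp [Matrix.zero_mulVec]
  | cons a s ha ih => simp [Finset.sum_cons, Matrix.add_mulVec, ih]

-- invertibility
private lemma invLem {X : ℕ} (QA : Matrix (Fin X) (Fin X) ℝ)
    (hQAnonneg : ∀ i j, 0 ≤ QA i j) (hQArow : ∀ i, ∑ j, QA i j = 1)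
    (t : ℝ) (ht : |t| < 1) : IsUnit ((1 : Matrix (Fin X) (Fin X) ℝ) - t • QA).det := by
  by_contra h
  have hdet : ((1 : Matrix (Fin X) (Fin X) ℝ) - t • QA).det = 0 := by
    simpa [isUnit_iff_ne_zero] using h
  obtain ⟨v, hv0, hv⟩ := (Matrix.exists_mulVec_eq_zero_iff).2 hdet
  obtain ⟨j0, hj0⟩ := Function.ne_iff.1 hv0
  have hne : (Finset.univ : Finset (Fin X)).Nonempty := ⟨j0, Finset.mem_univ _⟩
  obtain ⟨i, -, hi⟩ := Finset.exists_max_image Finset.univ (fun k => |v k|) hne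
  have hvi_pos : 0 < |v i| := lt_of_lt_of_le (abs_pos.2 hj0) (hi j0 (Finset.mem_univ _))
  have hveq : v i = t * ∑ j, QA i j * v j := by
    have h1 : ((1 : Matrix (Fin X) (Fin X) ℝ) - t • QA).mulVec v
        = v - t • QA.mulVec v := by
      rw [Matrix.sub_mulVec, Matrix.one_mulVec, Matrix.smul_mulVec]
    rw [h1, sub_eq_zero] at hv
    have := congrFun hv i
    simpa [Matrix.mulVec, dotProduct] using this
  have hb : |v i| ≤ |t| * |v i| := by
    calc |v i| = |t| * |∑ j, QA i j * v j| := by rw [hveq, abs_mul]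
    _ ≤ |t| * ∑ j, |QA i j * v j| := by
        gcongr; exact Finset.abs_sum_le_sum_abs _ _
    _ ≤ |t| * ∑ j, QA i j * |v i| := by
        gcongr with j hj
        rw [abs_mul, abs_of_nonneg (hQAnonneg i j)]
        exact mul_le_mul_of_nonneg_left (hi j (Finset.mem_univ _)) (hQAnonneg i j)
    _ = |t| * |v i| := by rw [← Finset.sum_mul, hQArow, one_mul]
  nlinarith [hvi_pos, abs_nonneg t]

/-- Derivative of flow utility under ρ-period finite dependence (Proposition 4). -/
theorem stmt_8 (X : ℕ) (QA Qa : Matrix (Fin X) (Fin X) ℝ)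
    (hQAnonneg : ∀ i j, 0 ≤ QA i j)
    (hQArow : ∀ i, ∑ j, QA i j = 1)
    (β : ℝ) (hβ0 : 0 ≤ β) (hβ1 : β < 1)
    (ρ : ℕ) (hρ : 1 ≤ ρ)
    (hfd : Qa * QA ^ ρ = QA ^ (ρ + 1))
    (pA pa : Fin X → ℝ)
    (hpA : ∀ x, pA x ∈ Set.Ioo (0 : ℝ) 1)
    (hpa : ∀ x, pa x ∈ Set.Ioo (0 : ℝ) 1) :
    HasDerivAt
      (fun t : ℝ =>
        (((1 : Matrix (Fin X) (Fin X) ℝ) - t • Qa) * (1 - t • QA)⁻¹).mulVec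
            (fun x => -Real.log (pA x))
          + fun x => Real.log (pa x))
      ((-((Qa - QA) * (∑ r ∈ Finset.range ρ, β ^ r • QA ^ r) * (1 - β • QA)⁻¹)).mulVec
        (fun x => -Real.log (pA x))) β := by
  set c : Fin X → ℝ := fun x => -Real.log (pA x) with hc
  set d : Fin X → ℝ := fun x => Real.log (pa x) with hd
  set E : Matrix (Fin X) (Fin X) ℝ := Qa - QA with hE
  set S : ℝ → Matrix (Fin X) (Fin X) ℝ := fun t => ∑ r ∈ Finset.range ρ, t ^ r • QA ^ r with hS
  set v : ℕ → (Fin X → ℝ) := fun r => (E * QA ^ r).mulVec c with hv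
  -- finite dependence: E * QA^ρ = 0
  have hE0 : E * QA ^ ρ = 0 := by
    rw [hE, sub_mul, hfd, pow_succ', sub_eq_zero]
  -- geometric sum identity
  have hg : ∀ t : ℝ, S t * ((1 : Matrix (Fin X) (Fin X) ℝ) - t • QA) = 1 - t ^ ρ • QA ^ ρ := by
    intro t
    have h := geom_sum_mul (t • QA) ρ
    simp only [smul_pow] at h
    rw [hS]
    rw [← neg_sub (t • QA) 1, mul_neg, h, neg_sub]
  -- key identity: E * S t * (1 - t•QA) = E - t^ρ • (E * QA^ρ) = E
  have hES : ∀ t : ℝ, E * S t * ((1 : Matrix (Fin X) (Fin X) ℝ) - t • QA) = E := by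
    intro t
    rw [Matrix.mul_assoc, hg, mul_sub, mul_one, Matrix.mul_smul, hE0, smul_zero, sub_zero]
  -- telescoping key lemma
  have hkey : ∀ (n : ℕ) (t : ℝ),
      (∑ r ∈ Finset.range n, (((r : ℝ) + 1) * t ^ r) • QA ^ r) * ((1 : Matrix (Fin X) (Fin X) ℝ) - t • QA)
        = (∑ r ∈ Finset.range n, t ^ r • QA ^ r) - (((n : ℝ)) * t ^ n) • QA ^ n := by
    intro n t
    induction n with
    | zero => simp
    | succ n ih =>
      rw [Finset.sum_range_succ, add_mul, ih, Finset.sum_range_succ]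
      have h1 : ((((n : ℝ) + 1) * t ^ n) • QA ^ n) * ((1 : Matrix (Fin X) (Fin X) ℝ) - t • QA)
          = (((n : ℝ) + 1) * t ^ n) • QA ^ n - (((n : ℝ) + 1) * t ^ (n + 1)) • QA ^ (n + 1) := by
        rw [mul_sub, mul_one, smul_mul_assoc]
        congr 1
        rw [Matrix.mul_smul, smul_smul, pow_succ, pow_succ]
        ring_nf
      rw [h1]
      push_cast
      module
  -- invertibility near β
  have habs : ∀ t : ℝ, t ∈ Set.Ioo (-1 : ℝ) 1 → |t| < 1 := fun t ht => abs_lt.2 ⟨ht.1, ht.2⟩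
  have hβmem : β ∈ Set.Ioo (-1 : ℝ) 1 := ⟨lt_of_lt_of_le neg_one_lt_zero hβ0, hβ1⟩
  have hβdet := invLem QA hQAnonneg hQArow β (habs β hβmem)
  -- the polynomial function h
  set hfun : ℝ → (Fin X → ℝ) := fun t => (c + d) - ∑ r ∈ Finset.range ρ, t ^ (r + 1) • v r with hhfun
  -- eventual equality
  have heq : ∀ t ∈ Set.Ioo (-1 : ℝ) 1,
      (((1 : Matrix (Fin X) (Fin X) ℝ) - t • Qa) * (1 - t • QA)⁻¹).mulVec c + d = hfun t := by
    intro t ht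
    have hdet := invLem QA hQAnonneg hQArow t (habs t ht)
    have hmid : ((1 : Matrix (Fin X) (Fin X) ℝ) - t • Qa)
        = ((1 : Matrix (Fin X) (Fin X) ℝ) - t • (E * S t)) * (1 - t • QA) := by
      rw [sub_mul, one_mul, smul_mul_assoc, hES t]
      rw [hE]
      rw [smul_sub]
      abel
    have hfactor : (((1 : Matrix (Fin X) (Fin X) ℝ) - t • Qa) * (1 - t • QA)⁻¹)
        = 1 - t • (E * S t) := by
      rw [hmid, Matrix.mul_nonsing_inv_cancel_right _ _ hdet]
    rw [hfactor]
    have hexp : (E * S t) = ∑ r ∈ Finset.range ρ, t ^ r • (E * QA ^ r) := by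
      rw [hS, Finset.mul_sum]
      exact Finset.sum_congr rfl fun r _ => (Matrix.mul_smul _ _ _)
    have hsmul : t • (∑ r ∈ Finset.range ρ, t ^ r • (E * QA ^ r))
        = ∑ r ∈ Finset.range ρ, t ^ (r + 1) • (E * QA ^ r) := by
      rw [Finset.smul_sum]
      exact Finset.sum_congr rfl fun r _ => by rw [smul_smul, ← pow_succ']
    rw [hexp, hsmul, hhfun]
    rw [Matrix.sub_mulVec, Matrix.one_mulVec, sumMulVec]
    have hvv : ∀ r ∈ Finset.range ρ, (t ^ (r + 1) • (E * QA ^ r)).mulVec c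
        = t ^ (r + 1) • v r := fun r _ => by rw [hv, Matrix.smul_mulVec]
    rw [Finset.sum_congr rfl hvv]
    exact sub_add_eq_add_sub _ _ _
  -- derivative of hfun
  have hderiv : HasDerivAt hfun
      (-(∑ r ∈ Finset.range ρ, (((r : ℝ) + 1) * β ^ r) • v r)) β := by
    have hsum : HasDerivAt (fun t : ℝ => ∑ r ∈ Finset.range ρ, t ^ (r + 1) • v r)
        (∑ r ∈ Finset.range ρ, (((r : ℝ) + 1) * β ^ r) • v r) β := by
      apply HasDerivAt.fun_sum
      intro r _
      have := (hasDerivAt_pow (r + 1) β).smul_const (v r)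
      simpa [Nat.cast_add, add_comm] using this
    have h := (hasDerivAt_const β (c + d)).sub hsum
    rw [zero_sub] at h
    exact h
  -- identify the stated derivative
  have hT : E * S β * ((1 : Matrix (Fin X) (Fin X) ℝ) - β • QA)⁻¹
      = ∑ r ∈ Finset.range ρ, (((r : ℝ) + 1) * β ^ r) • (E * QA ^ r) := by
    have h1 : (∑ r ∈ Finset.range ρ, (((r : ℝ) + 1) * β ^ r) • (E * QA ^ r))
        = E * (∑ r ∈ Finset.range ρ, (((r : ℝ) + 1) * β ^ r) • QA ^ r) := by
      rw [Finset.mul_sum]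
      exact Finset.sum_congr rfl fun r _ => (Matrix.mul_smul _ _ _).symm
    have h2 : E * (∑ r ∈ Finset.range ρ, (((r : ℝ) + 1) * β ^ r) • QA ^ r)
        * ((1 : Matrix (Fin X) (Fin X) ℝ) - β • QA) = E * S β := by
      rw [Matrix.mul_assoc, hkey ρ β, mul_sub, Matrix.mul_smul, hE0, smul_zero, sub_zero, hS]
    have h3 := congrArg (fun M => M * ((1 : Matrix (Fin X) (Fin X) ℝ) - β • QA)⁻¹) h2
    rw [Matrix.mul_nonsing_inv_cancel_right _ _ hβdet] at h3
    rw [← h3, h1]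
  have hDeq : ((-(E * S β * ((1 : Matrix (Fin X) (Fin X) ℝ) - β • QA)⁻¹)).mulVec c)
      = -(∑ r ∈ Finset.range ρ, (((r : ℝ) + 1) * β ^ r) • v r) := by
    rw [hT, Matrix.neg_mulVec, sumMulVec]
    congr 1
    exact Finset.sum_congr rfl fun r _ => by rw [hv, Matrix.smul_mulVec]
  -- conclude
  have hfinal : HasDerivAt hfun
      ((-(E * S β * ((1 : Matrix (Fin X) (Fin X) ℝ) - β • QA)⁻¹)).mulVec c) β := by
    rw [hDeq]; exact hderiv
  refine hfinal.congr_of_eventuallyEq ?_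
  filter_upwards [Ioo_mem_nhds hβmem.1 hβmem.2] with t ht
  exact heq t ht
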